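/- Let r ≥ 0. Then the m0-robustness risk is bounded by the sum of the classification risk, the boundary risk, and the ground-truth boundary risk: D(V₀(r)) ≤ R_c + R_b(r) + R_gb(r). -/

import Mathlib

open MeasureTheory

/-- The m0-robustness risk is bounded by the sum of the classification risk, the
boundary risk, and the ground-truth boundary risk:
`D(V₀(r)) ≤ R_c + R_b(r) + R_gb(r)`. -/
theorem m0_risk_le_sum_of_risks
    {m n : ℕ} (D : Measure (EuclideanSpace ℝ (Fin m))) [IsProbabilityMeasure D]
    (f c : EuclideanSpace ℝ (Fin m) → Fin n) (r : ℝ) (hr : 0 ≤ r) :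
    D {x | ∃ x', dist x' x ≤ r ∧ f x' ≠ c x'} ≤
      D {x | f x ≠ c x} +
        D {x | f x = c x ∧ ∃ x', dist x' x ≤ r ∧ f x' ≠ f x} +
        D {x | f x = c x ∧ (∃ x', dist x' x ≤ r ∧ c x' ≠ c x) ∧
          ∀ x'', dist x'' x ≤ r → f x'' = f x} := by
  calc D {x | ∃ x', dist x' x ≤ r ∧ f x' ≠ c x'}
      ≤ D ({x | f x ≠ c x} ∪ ({x | f x = c x ∧ ∃ x', dist x' x ≤ r ∧ f x' ≠ f x} ∪
          {x | f x = c x ∧ (∃ x', dist x' x ≤ r ∧ c x' ≠ c x) ∧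
            ∀ x'', dist x'' x ≤ r → f x'' = f x})) := by
        apply measure_mono
        intro x hx
        obtain ⟨x', hd, hfc⟩ := hx
        by_cases h1 : f x = c x
        · by_cases h2 : ∃ x'', dist x'' x ≤ r ∧ f x'' ≠ f x
          · exact Or.inr (Or.inl ⟨h1, h2⟩)
          · push_neg at h2
            refine Or.inr (Or.inr ⟨h1, ⟨x', hd, ?_⟩, h2⟩)
            have := h2 x' hd
            rw [this, h1] at hfc
            exact hfc.symm
        · exact Or.inl h1
    _ ≤ _ := by
        refine le_trans (measure_union_le _ _) ?_
        rw [add_assoc]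
        exact add_le_add le_rfl (measure_union_le (μ := D) _ _)
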